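/- An orthogonal projection p ∈ B(H) satisfies L(p) = 0 for a GKSL generator L if and only if p commutes with all operators L_ℓ and with H. Consequently p is a fixed point of the semigroup T_t = e^{tL} if and only if p commutes with all L_ℓ, L_ℓ* and H. -/

import Mathlib

set_option synthInstance.maxHeartbeats 1000000
set_option maxHeartbeats 1000000

open NormedSpace

lemma aux_sum_zero {Hs : Type} [NormedAddCommGroup Hs] [InnerProductSpace ℂ Hs] [CompleteSpace Hs]
    {N : ℕ} (a : Fin N → (Hs →L[ℂ] Hs)) (h : ∑ ℓ : Fin N, star (a ℓ) * a ℓ = 0) (ℓ : Fin N) :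
    a ℓ = 0 := by
  ext v
  have h2 := congrArg (fun T : Hs →L[ℂ] Hs => (inner ℂ (T v) v : ℂ)) h
  simp only [ContinuousLinearMap.sum_apply, ContinuousLinearMap.mul_apply,
    ContinuousLinearMap.zero_apply, inner_zero_left, sum_inner] at h2
  have h3 : ∀ j : Fin N, (inner ℂ ((star (a j)) ((a j) v)) v : ℂ) = ((‖a j v‖:ℝ)^2 : ℝ) := by
    intro j
    rw [ContinuousLinearMap.star_eq_adjoint, ContinuousLinearMap.adjoint_inner_left,
      inner_self_eq_norm_sq_to_K]
    norm_cast
  rw [Finset.sum_congr rfl (fun j _ => h3 j)] at h2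
  have h4 : ∑ j : Fin N, (‖a j v‖ : ℝ)^2 = 0 := by exact_mod_cast h2
  have h5 : (‖a ℓ v‖ : ℝ)^2 = 0 :=
    (Finset.sum_eq_zero_iff_of_nonneg (fun j _ => sq_nonneg _)).1 h4 ℓ (Finset.mem_univ ℓ)
  simpa using pow_eq_zero_iff (n := 2) (by norm_num) |>.1 h5

lemma sandwich1 {A : Type*} [Ring A] [StarRing A] (p l : A) (hpp : p * p = p) (hps : star p = p) :
    (1-p) * (star l * l * p - 2 * (star l * p * l) + p * (star l * l)) * (1-p)
      = -(2 * (star (p * l * (1-p)) * (p * l * (1-p)))) := by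
  have hpp' : ∀ x : A, p * (p * x) = p * x := fun x => by rw [← mul_assoc, hpp]
  have e : star (p * l * (1-p)) = (1-p) * (star l * p) := by
    simp [star_mul, hps, mul_assoc]
  rw [e]
  simp only [mul_sub, sub_mul, mul_one, one_mul, mul_assoc, hpp, hpp', two_mul, add_mul,
    mul_add, neg_add, neg_sub, sub_mul]
  abel

lemma sandwich2 {A : Type*} [Ring A] [StarRing A] (p l : A) (hpp : p * p = p) (hps : star p = p) :
    p * (star l * l * p - 2 * (star l * p * l) + p * (star l * l)) * p
      = 2 * (star ((1-p) * l * p) * ((1-p) * l * p)) := by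
  have hpp' : ∀ x : A, p * (p * x) = p * x := fun x => by rw [← mul_assoc, hpp]
  have e : star ((1-p) * l * p) = p * (star l * (1-p)) := by
    simp [star_mul, hps, mul_assoc]
  rw [e]
  simp only [mul_sub, sub_mul, mul_one, one_mul, mul_assoc, hpp, hpp', two_mul, add_mul,
    mul_add, neg_add, neg_sub, sub_mul]
  abel

lemma term_zero {A : Type*} [Ring A] [StarRing A] (p l : A) (hps : star p = p)
    (hc : p * l = l * p) :
    star l * l * p - 2 * (star l * p * l) + p * (star l * l) = 0 := by
  have hc' : p * star l = star l * p := by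
    have h := congrArg star hc
    simp only [star_mul, hps] at h
    exact h.symm
  have h1 : star l * l * p = star l * (p * l) := by rw [mul_assoc, hc]
  have h2 : p * (star l * l) = star l * (p * l) := by rw [← mul_assoc, hc', mul_assoc]
  have h3 : star l * p * l = star l * (p * l) := by rw [mul_assoc]
  rw [h1, h2, h3]
  noncomm_ring

lemma exp_fixed {Hs : Type} [NormedAddCommGroup Hs] [InnerProductSpace ℂ Hs] [CompleteSpace Hs]
    (𝓛 : (Hs →L[ℂ] Hs) →L[ℂ] (Hs →L[ℂ] Hs)) (p : Hs →L[ℂ] Hs)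
    (h0 : 𝓛 p = 0) (t : ℝ) : exp (t • 𝓛) p = p := by
  have hsum : Summable (fun n : ℕ => ((n.factorial : ℂ))⁻¹ • (t • 𝓛)^n) :=
    expSeries_summable' (t • 𝓛)
  rw [exp_eq_tsum ℂ]
  have happ := ((ContinuousLinearMap.apply ℂ (Hs →L[ℂ] Hs)) p).map_tsum hsum
  simp only [ContinuousLinearMap.apply_apply] at happ
  rw [happ]
  rw [tsum_eq_single 0]
  · simp
  · intro n hn
    obtain ⟨m, rfl⟩ := Nat.exists_eq_succ_of_ne_zero hn
    have : ((t • 𝓛)^(m+1)) p = 0 := by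
      rw [pow_succ, ContinuousLinearMap.mul_apply, ContinuousLinearMap.smul_apply, h0,
        smul_zero, map_zero]
    simp [this]

lemma deriv_zero' {Hs : Type} [NormedAddCommGroup Hs] [InnerProductSpace ℂ Hs] [CompleteSpace Hs]
    (𝓛 : (Hs →L[ℂ] Hs) →L[ℂ] (Hs →L[ℂ] Hs)) (p : Hs →L[ℂ] Hs)
    (h : ∀ t : ℝ, exp (t • 𝓛) p = p) : 𝓛 p = 0 := by
  have hd : HasDerivAt (fun u : ℝ => exp (u • 𝓛)) (𝓛 * exp ((0:ℝ) • 𝓛)) 0 :=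
    hasDerivAt_exp_smul_const' 𝓛 0
  have hd2 : HasDerivAt (fun u : ℝ => exp (u • 𝓛) p) ((𝓛 * exp ((0:ℝ) • 𝓛)) p) 0 := by
    have := (((ContinuousLinearMap.apply ℂ (Hs →L[ℂ] Hs)) p).restrictScalars
      ℝ).hasFDerivAt.comp_hasDerivAt 0 hd
    simp at this; exact this
  have he : (fun u : ℝ => exp (u • 𝓛) p) = fun _ => p := by
    funext u
    exact h u
  rw [he] at hd2
  have := hd2.unique (hasDerivAt_const _ _)
  have hz : (0:ℝ) • 𝓛 = 0 := zero_smul ℝ 𝓛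
  rw [hz, exp_zero, mul_one] at this
  exact this

lemma exp_all {Hs : Type} [NormedAddCommGroup Hs] [InnerProductSpace ℂ Hs] [CompleteSpace Hs]
    (𝓛 : (Hs →L[ℂ] Hs) →L[ℂ] (Hs →L[ℂ] Hs)) (p : Hs →L[ℂ] Hs)
    (h : ∀ t : ℝ, 0 ≤ t → exp (t • 𝓛) p = p) (t : ℝ) : exp (t • 𝓛) p = p := by
  rcases le_total 0 t with ht | ht
  · exact h t ht
  · have h1 : exp ((-t) • 𝓛) p = p := h (-t) (by linarith)
    have hneg : (-t) • 𝓛 = -(t • 𝓛) := neg_smul t 𝓛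
    have h2 : exp (t • 𝓛) * exp ((-t) • 𝓛) = 1 := by
      letI : NormedAlgebra ℚ ((Hs →L[ℂ] Hs) →L[ℂ] Hs →L[ℂ] Hs) :=
        NormedAlgebra.restrictScalars ℚ ℂ _
      rw [hneg, ← exp_add_of_commute (Commute.refl (t • 𝓛)).neg_right]
      simp
    calc exp (t • 𝓛) p = exp (t • 𝓛) (exp ((-t) • 𝓛) p) := by rw [h1]
      _ = (exp (t • 𝓛) * exp ((-t) • 𝓛)) p := rfl
      _ = p := by rw [h2]; rfl

/-- a projection `p` satisfies `L(p) = 0` iff it commutes with all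
`Lℓ` and with `H`; consequently `p` is a fixed point of `T_t = e^{tL}` iff it
commutes with all `Lℓ`, `Lℓ*` and `H`. -/
theorem projection_fixed_iff_commutes
    {Hs : Type} [NormedAddCommGroup Hs] [InnerProductSpace ℂ Hs] [CompleteSpace Hs]
    (N : ℕ) (H : Hs →L[ℂ] Hs) (hH : IsSelfAdjoint H)
    (L : Fin N → (Hs →L[ℂ] Hs))
    (𝓛 : (Hs →L[ℂ] Hs) →L[ℂ] (Hs →L[ℂ] Hs))
    (h𝓛 : ∀ y, 𝓛 y = Complex.I • (H * y - y * H) -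
      (1/2 : ℂ) • ∑ ℓ, (star (L ℓ) * L ℓ * y - 2 * (star (L ℓ) * y * L ℓ) +
        y * (star (L ℓ) * L ℓ)))
    (p : Hs →L[ℂ] Hs) (hp : IsSelfAdjoint p ∧ p * p = p) :
    (𝓛 p = 0 ↔ ((∀ ℓ, Commute p (L ℓ)) ∧ Commute p H)) ∧
    ((∀ t : ℝ, 0 ≤ t → NormedSpace.exp (t • 𝓛) p = p) ↔
      ((∀ ℓ, Commute p (L ℓ) ∧ Commute p (star (L ℓ))) ∧ Commute p H)) := by
  obtain ⟨hps', hpp⟩ := hp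
  have hps : star p = p := hps'
  have half2 : ∀ x : Hs →L[ℂ] Hs, (1/2 : ℂ) • (2 * x) = x := fun x => by
    rw [two_mul, smul_add, ← add_smul]; norm_num
  have hpp' : ∀ x : Hs →L[ℂ] Hs, p * (p * x) = p * x := fun x => by rw [← mul_assoc, hpp]
  have dist : ∀ (q x y : Hs →L[ℂ] Hs), q * (Complex.I • x - (1/2:ℂ) • y) * q
      = Complex.I • (q*x*q) - (1/2:ℂ) • (q*y*q) := fun q x y => by
    simp only [mul_sub, sub_mul, mul_smul_comm, smul_mul_assoc]
  have hstarcomm : ∀ l : Hs →L[ℂ] Hs, Commute p l → Commute p (star l) := by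
    intro l hc
    have h := congrArg star hc.eq
    simp only [star_mul, hps] at h
    exact h.symm
  have main : 𝓛 p = 0 ↔ ((∀ ℓ, Commute p (L ℓ)) ∧ Commute p H) := by
    constructor
    · intro h0
      have key1 : ∑ ℓ, star (p * L ℓ * (1-p)) * (p * L ℓ * (1-p)) = 0 := by
        have e1 : (1-p) * 𝓛 p * (1-p)
            = Complex.I • ((1-p) * (H*p - p*H) * (1-p)) -
              (1/2:ℂ) • ∑ ℓ, ((1-p) * (star (L ℓ) * L ℓ * p - 2 * (star (L ℓ) * p * L ℓ) +
                p * (star (L ℓ) * L ℓ)) * (1-p)) := by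
          rw [h𝓛 p, dist, Finset.mul_sum, Finset.sum_mul]
        have e2 : (1-p) * (H*p - p*H) * (1-p) = 0 := by
          simp only [mul_sub, sub_mul, mul_one, one_mul, mul_assoc, hpp, hpp']
          abel
        rw [Finset.sum_congr rfl (fun ℓ _ => sandwich1 p (L ℓ) hpp hps), e2, h0, smul_zero,
          mul_zero, zero_mul] at e1
        rw [Finset.sum_neg_distrib, ← Finset.mul_sum, smul_neg, half2, zero_sub, neg_neg] at e1
        exact e1.symm
      have key2 : ∑ ℓ, star ((1-p) * L ℓ * p) * ((1-p) * L ℓ * p) = 0 := by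
        have e1 : p * 𝓛 p * p
            = Complex.I • (p * (H*p - p*H) * p) -
              (1/2:ℂ) • ∑ ℓ, (p * (star (L ℓ) * L ℓ * p - 2 * (star (L ℓ) * p * L ℓ) +
                p * (star (L ℓ) * L ℓ)) * p) := by
          rw [h𝓛 p, dist, Finset.mul_sum, Finset.sum_mul]
        have e2 : p * (H*p - p*H) * p = 0 := by
          simp only [mul_sub, sub_mul, mul_one, one_mul, mul_assoc, hpp, hpp']
          abel
        rw [Finset.sum_congr rfl (fun ℓ _ => sandwich2 p (L ℓ) hpp hps), e2, h0, smul_zero,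
          mul_zero, zero_mul, ← Finset.mul_sum, half2, zero_sub] at e1
        exact neg_eq_zero.mp e1.symm
      have hA : ∀ ℓ, p * L ℓ * (1-p) = 0 := aux_sum_zero _ key1
      have hB : ∀ ℓ, (1-p) * L ℓ * p = 0 := aux_sum_zero _ key2
      have hcomm : ∀ ℓ, Commute p (L ℓ) := by
        intro ℓ
        have a1 : p * L ℓ = p * L ℓ * p := by
          have h := hA ℓ
          rw [mul_sub, mul_one, sub_eq_zero] at h
          exact h
        have a2 : L ℓ * p = p * L ℓ * p := by
          have h := hB ℓ
          rw [sub_mul, sub_mul, one_mul, sub_eq_zero] at h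
          exact h
        exact a1.trans a2.symm
      refine ⟨hcomm, ?_⟩
      have hz : ∀ ℓ : Fin N, star (L ℓ) * L ℓ * p - 2 * (star (L ℓ) * p * L ℓ) +
          p * (star (L ℓ) * L ℓ) = 0 := fun ℓ => term_zero p (L ℓ) hps (hcomm ℓ)
      rw [h𝓛 p, Finset.sum_congr rfl (fun ℓ _ => hz ℓ), Finset.sum_const, smul_zero,
        smul_zero, sub_zero] at h0
      have h1 : H * p - p * H = 0 := by
        rcases smul_eq_zero.mp h0 with h | h
        · exact absurd h Complex.I_ne_zero
        · exact h
      rw [sub_eq_zero] at h1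
      exact h1.symm
    · intro hc
      obtain ⟨hcL, hcH⟩ := hc
      rw [h𝓛 p]
      have hz : ∀ ℓ : Fin N, star (L ℓ) * L ℓ * p - 2 * (star (L ℓ) * p * L ℓ) +
          p * (star (L ℓ) * L ℓ) = 0 := fun ℓ => term_zero p (L ℓ) hps (hcL ℓ)
      rw [Finset.sum_congr rfl (fun ℓ _ => hz ℓ), Finset.sum_const, smul_zero, smul_zero,
        sub_zero, hcH.eq, sub_self, smul_zero]
  refine ⟨main, ?_⟩
  constructor
  · intro h
    have h0 : 𝓛 p = 0 := deriv_zero' 𝓛 p (exp_all 𝓛 p h)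
    obtain ⟨hcL, hcH⟩ := main.mp h0
    exact ⟨fun ℓ => ⟨hcL ℓ, hstarcomm _ (hcL ℓ)⟩, hcH⟩
  · intro hc
    obtain ⟨hcL, hcH⟩ := hc
    have h0 : 𝓛 p = 0 := main.mpr ⟨fun ℓ => (hcL ℓ).1, hcH⟩
    exact fun t _ => exp_fixed 𝓛 p h0 t
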